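/- Let v_a, v_b, v_c, v_∅ be unit vectors in a real inner product space with v_a + v_b + v_c = −v_∅, and write γ_x = ⟨v_x, v_∅⟩ for x ∈ {a, b, c}. Let 0 < ε ≤ 1/4 and suppose γ_a, γ_b, γ_c ∈ [−1/3 − ε, −1/3 + ε]. For x ∈ {a, b, c} define the unit vector û_x = (v_x − γ_x v_∅)/√(1 − γ_x²). Then ‖û_a + û_b + û_c‖² ≤ 18ε. -/
import Mathlib

open scoped RealInnerProductSpace

private lemma aux_final (ε : ℝ) (hε0 : 0 < ε) (hε : ε ≤ 1/4) :
    (355/48 * ε) ^ 2 ≤ 18 * ε := by nlinarith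

private lemma aux_sqrt_lb (s p : ℝ) (h2 : s ^ 2 = p) (hp : 16/25 ≤ p) (h0 : 0 ≤ s) :
    4/5 ≤ s := by nlinarith

private lemma aux_p_lb (γ ε : ℝ) (h1 : -1/3 - ε ≤ γ) (h2 : γ ≤ -1/3 + ε) (hε : ε ≤ 1/4) :
    16/25 ≤ 1 - γ ^ 2 := by nlinarith

private lemma aux_sq_diff (x y ε : ℝ) (hx1 : -7/12 ≤ x) (hx2 : x ≤ -1/12)
    (hy1 : -7/12 ≤ y) (hy2 : y ≤ -1/12)
    (hx3 : -1/3 - ε ≤ x) (hx4 : x ≤ -1/3 + ε) (hy3 : -1/3 - ε ≤ y) (hy4 : y ≤ -1/3 + ε)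
    (hε0 : 0 < ε) :
    y ^ 2 - x ^ 2 ≤ 7/3 * ε := by
  rcases le_or_gt y x with h | h
  · nlinarith
  · nlinarith

private lemma aux_diff (x y u v ε : ℝ) (hx1 : -7/12 ≤ x) (hx2 : x ≤ -1/12)
    (hy1 : -7/12 ≤ y) (hy2 : y ≤ -1/12)
    (hx3 : -1/3 - ε ≤ x) (hx4 : x ≤ -1/3 + ε) (hy3 : -1/3 - ε ≤ y) (hy4 : y ≤ -1/3 + ε)
    (hε0 : 0 < ε)
    (hu2 : u ^ 2 = 1 - x ^ 2) (hv2 : v ^ 2 = 1 - y ^ 2) (hu4 : 4/5 ≤ u) (hv4 : 4/5 ≤ v) :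
    |u - v| ≤ 35/24 * ε := by
  have key : (u - v) * (u + v) = y ^ 2 - x ^ 2 := by nlinarith
  have hsum8 : (8:ℝ)/5 ≤ u + v := by linarith
  have h1 : y ^ 2 - x ^ 2 ≤ 7/3 * ε :=
    aux_sq_diff x y ε hx1 hx2 hy1 hy2 hx3 hx4 hy3 hy4 hε0
  have h2 : x ^ 2 - y ^ 2 ≤ 7/3 * ε :=
    aux_sq_diff y x ε hy1 hy2 hx1 hx2 hy3 hy4 hx3 hx4 hε0
  rw [abs_le]
  constructor
  · rcases le_or_gt u v with h | h
    · nlinarith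
    · linarith [hε0]
  · rcases le_or_gt v u with h | h
    · nlinarith
    · linarith [hε0]

set_option maxHeartbeats 2000000 in
theorem balanced_orthogonal_components_sum_small
    {W : Type*} [NormedAddCommGroup W] [InnerProductSpace ℝ W]
    (va vb vc v₀ : W)
    (hva : ‖va‖ = 1) (hvb : ‖vb‖ = 1) (hvc : ‖vc‖ = 1) (hv₀ : ‖v₀‖ = 1)
    (hsum : va + vb + vc = -v₀)
    (ε : ℝ) (hε0 : 0 < ε) (hε : ε ≤ 1/4)
    (γa γb γc : ℝ)
    (hγa : γa = ⟪va, v₀⟫) (hγb : γb = ⟪vb, v₀⟫) (hγc : γc = ⟪vc, v₀⟫)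
    (hba : γa ∈ Set.Icc (-1/3 - ε) (-1/3 + ε))
    (hbb : γb ∈ Set.Icc (-1/3 - ε) (-1/3 + ε))
    (hbc : γc ∈ Set.Icc (-1/3 - ε) (-1/3 + ε))
    (ua ub uc : W)
    (hua : ua = (Real.sqrt (1 - γa ^ 2))⁻¹ • (va - γa • v₀))
    (hub : ub = (Real.sqrt (1 - γb ^ 2))⁻¹ • (vb - γb • v₀))
    (huc : uc = (Real.sqrt (1 - γc ^ 2))⁻¹ • (vc - γc • v₀)) :
    ‖ua + ub + uc‖ ^ 2 ≤ 18 * ε := by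
  obtain ⟨hba1, hba2⟩ := hba
  obtain ⟨hbb1, hbb2⟩ := hbb
  obtain ⟨hbc1, hbc2⟩ := hbc
  set sa := Real.sqrt (1 - γa ^ 2) with hsa_def
  set sb := Real.sqrt (1 - γb ^ 2) with hsb_def
  set sc := Real.sqrt (1 - γc ^ 2) with hsc_def
  have hga1 : -(7:ℝ)/12 ≤ γa := by linarith
  have hga2 : γa ≤ -(1:ℝ)/12 := by linarith
  have hgb1 : -(7:ℝ)/12 ≤ γb := by linarith
  have hgb2 : γb ≤ -(1:ℝ)/12 := by linarith
  have hgc1 : -(7:ℝ)/12 ≤ γc := by linarith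
  have hgc2 : γc ≤ -(1:ℝ)/12 := by linarith
  have hpa : (16:ℝ)/25 ≤ 1 - γa ^ 2 := aux_p_lb γa ε hba1 hba2 hε
  have hpb : (16:ℝ)/25 ≤ 1 - γb ^ 2 := aux_p_lb γb ε hbb1 hbb2 hε
  have hpc : (16:ℝ)/25 ≤ 1 - γc ^ 2 := aux_p_lb γc ε hbc1 hbc2 hε
  have hsa2 : sa ^ 2 = 1 - γa ^ 2 := Real.sq_sqrt (by linarith)
  have hsb2 : sb ^ 2 = 1 - γb ^ 2 := Real.sq_sqrt (by linarith)
  have hsc2 : sc ^ 2 = 1 - γc ^ 2 := Real.sq_sqrt (by linarith)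
  have hsa_lb : (4:ℝ)/5 ≤ sa := aux_sqrt_lb sa _ hsa2 hpa (Real.sqrt_nonneg _)
  have hsb_lb : (4:ℝ)/5 ≤ sb := aux_sqrt_lb sb _ hsb2 hpb (Real.sqrt_nonneg _)
  have hsc_lb : (4:ℝ)/5 ≤ sc := aux_sqrt_lb sc _ hsc2 hpc (Real.sqrt_nonneg _)
  have hsa_ub : sa ≤ 1 := Real.sqrt_le_one.mpr (by nlinarith [sq_nonneg γa])
  have hsb_ub : sb ≤ 1 := Real.sqrt_le_one.mpr (by nlinarith [sq_nonneg γb])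
  have hsc_ub : sc ≤ 1 := Real.sqrt_le_one.mpr (by nlinarith [sq_nonneg γc])
  have hsa_pos : (0:ℝ) < sa := by linarith
  have hsb_pos : (0:ℝ) < sb := by linarith
  have hsc_pos : (0:ℝ) < sc := by linarith
  -- norms of the w vectors
  have hnw : ∀ (v : W) (γ : ℝ), ‖v‖ = 1 → γ = ⟪v, v₀⟫ → ‖v - γ • v₀‖ ^ 2 = 1 - γ ^ 2 := by
    intro v γ hv hγ
    have h := norm_sub_sq_real v (γ • v₀)
    rw [inner_smul_right, norm_smul, hv, hv₀, ← hγ] at h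
    simp only [Real.norm_eq_abs, mul_one] at h
    rw [h, sq_abs]
    ring
  have hwa : ‖va - γa • v₀‖ = sa := by
    rw [← Real.sqrt_sq (norm_nonneg (va - γa • v₀)), hnw va γa hva hγa]
  have hwb : ‖vb - γb • v₀‖ = sb := by
    rw [← Real.sqrt_sq (norm_nonneg (vb - γb • v₀)), hnw vb γb hvb hγb]
  have hwc : ‖vc - γc • v₀‖ = sc := by
    rw [← Real.sqrt_sq (norm_nonneg (vc - γc • v₀)), hnw vc γc hvc hγc]
  -- the sum of w's
  have hu : (va - γa • v₀) + (vb - γb • v₀) + (vc - γc • v₀)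
      = -((1 + γa + γb + γc) • v₀) := by
    have h : va + vb + vc = -v₀ := hsum
    rw [add_smul, add_smul, add_smul, one_smul]
    rw [show va - γa • v₀ + (vb - γb • v₀) + (vc - γc • v₀) =
      (va + vb + vc) - (γa • v₀ + γb • v₀ + γc • v₀) by abel, h]
    abel
  have hnu : ‖(va - γa • v₀) + (vb - γb • v₀) + (vc - γc • v₀)‖ ≤ 3 * ε := by
    rw [hu, norm_neg, norm_smul, hv₀, mul_one, Real.norm_eq_abs, abs_le]
    constructor <;> linarith
  -- decomposition
  have hdec : ua + ub + uc
      = sa⁻¹ • ((va - γa • v₀) + (vb - γb • v₀) + (vc - γc • v₀))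
        + (sb⁻¹ - sa⁻¹) • (vb - γb • v₀)
        + (sc⁻¹ - sa⁻¹) • (vc - γc • v₀) := by
    rw [hua, hub, huc]
    module
  have hdab : |sa - sb| ≤ 35/24 * ε :=
    aux_diff γa γb sa sb ε hga1 hga2 hgb1 hgb2 hba1 hba2 hbb1 hbb2 hε0
      hsa2 hsb2 hsa_lb hsb_lb
  have hdac : |sa - sc| ≤ 35/24 * ε :=
    aux_diff γa γc sa sc ε hga1 hga2 hgc1 hgc2 hba1 hba2 hbc1 hbc2 hε0
      hsa2 hsc2 hsa_lb hsc_lb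
  -- bound on the cross terms
  have hcross : ∀ s : ℝ, 4/5 ≤ s → s ≤ 1 → |sa - s| ≤ 35/24 * ε →
      |s⁻¹ - sa⁻¹| * s ≤ 175/96 * ε := by
    intro s hs1 hs2 hd
    have hspos : (0:ℝ) < s := by linarith
    have heq : s⁻¹ - sa⁻¹ = (sa - s) / (s * sa) := inv_sub_inv hspos.ne' hsa_pos.ne'
    have h3 : |s⁻¹ - sa⁻¹| * s = |sa - s| / sa := by
      rw [heq, abs_div, abs_of_pos (mul_pos hspos hsa_pos), div_mul_eq_mul_div,
        mul_comm s sa, ← mul_div_mul_right (|sa - s|) sa hspos.ne']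
    rw [h3, div_le_iff₀ hsa_pos]
    calc |sa - s| ≤ 35/24 * ε := hd
      _ ≤ 175/96 * ε * (4/5) := by linarith
      _ ≤ 175/96 * ε * sa := by gcongr
  -- norm bound
  have hnorm : ‖ua + ub + uc‖ ≤ 355/48 * ε := by
    rw [hdec]
    calc ‖sa⁻¹ • ((va - γa • v₀) + (vb - γb • v₀) + (vc - γc • v₀))
        + (sb⁻¹ - sa⁻¹) • (vb - γb • v₀) + (sc⁻¹ - sa⁻¹) • (vc - γc • v₀)‖
        ≤ ‖sa⁻¹ • ((va - γa • v₀) + (vb - γb • v₀) + (vc - γc • v₀))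
          + (sb⁻¹ - sa⁻¹) • (vb - γb • v₀)‖ + ‖(sc⁻¹ - sa⁻¹) • (vc - γc • v₀)‖ :=
          norm_add_le _ _
      _ ≤ ‖sa⁻¹ • ((va - γa • v₀) + (vb - γb • v₀) + (vc - γc • v₀))‖
          + ‖(sb⁻¹ - sa⁻¹) • (vb - γb • v₀)‖ + ‖(sc⁻¹ - sa⁻¹) • (vc - γc • v₀)‖ := by
          gcongr
          exact norm_add_le _ _
      _ ≤ 355/48 * ε := by
          rw [norm_smul, norm_smul, norm_smul, hwb, hwc, Real.norm_eq_abs,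
            Real.norm_eq_abs, Real.norm_eq_abs, abs_inv, abs_of_pos hsa_pos]
          have h1 : sa⁻¹ * ‖(va - γa • v₀) + (vb - γb • v₀) + (vc - γc • v₀)‖
              ≤ sa⁻¹ * (3 * ε) :=
            mul_le_mul_of_nonneg_left hnu (by positivity)
          have h1' : sa⁻¹ * (3 * ε) ≤ 5/4 * (3 * ε) := by
            apply mul_le_mul_of_nonneg_right _ (by linarith)
            rw [inv_le_comm₀ hsa_pos (by norm_num)]
            linarith
          have h2 := hcross sb hsb_lb hsb_ub hdab
          have h3 := hcross sc hsc_lb hsc_ub hdac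
          linarith
  have h0 : (0:ℝ) ≤ ‖ua + ub + uc‖ := norm_nonneg _
  have hsq : ‖ua + ub + uc‖ ^ 2 ≤ (355/48 * ε) ^ 2 :=
    pow_le_pow_left₀ h0 hnorm 2
  linarith [hsq, aux_final ε hε0 hε]
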